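/- Let p be an odd prime, let m ≥ 1 be an integer, let q = p^m, and let r be an integer with 0 ≤ r ≤ p-1. Then the mod-p Legendre polynomials satisfy P̄_{q-1-r}(X) = P̄_r(X) in F_p[X]. -/

import Mathlib

open Polynomial Finset Nat

section Aux

variable {p : ℕ} [Fact p.Prime]

/-- One step of Lucas' theorem, in convenient form. -/
lemma lucas_step (a b c d : ℕ) (hb : b < p) (hd : d < p) :
    (((p * a + b).choose (p * c + d) : ℕ) : ZMod p) =
      (b.choose d : ZMod p) * (a.choose c : ZMod p) := by
  have h := (Choose.choose_modEq_choose_mod_mul_choose_div_nat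
    (p := p) (n := p * a + b) (k := p * c + d))
  have h1 : (p * a + b) % p = b := by
    simp [Nat.mul_add_mod, Nat.mod_eq_of_lt hb]
  have h2 : (p * a + b) / p = a := by
    rw [Nat.add_comm, Nat.add_mul_div_left _ _ (Fact.out : p.Prime).pos,
      Nat.div_eq_of_lt hb, Nat.zero_add]
  have h3 : (p * c + d) % p = d := by
    simp [Nat.mul_add_mod, Nat.mod_eq_of_lt hd]
  have h4 : (p * c + d) / p = c := by
    rw [Nat.add_comm, Nat.add_mul_div_left _ _ (Fact.out : p.Prime).pos,
      Nat.div_eq_of_lt hd, Nat.zero_add]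
  rw [h1, h2, h3, h4] at h
  have := (ZMod.natCast_eq_natCast_iff _ _ _).mpr h
  rw [this]; push_cast; ring

lemma choose_p_sub_one (k : ℕ) (hk : k ≤ p - 1) :
    (((p - 1).choose k : ℕ) : ZMod p) = (-1) ^ k := by
  induction k with
  | zero => simp
  | succ k ih =>
    have hk' : k ≤ p - 1 := le_of_lt (lt_of_lt_of_le (lt_succ_self k) hk)
    have h := choose_succ_right_eq (p - 1) k
    have hkp : k + 1 < p := by
      have := (Fact.out : p.Prime).pos; omega
    have hcast : ((p - 1 - k : ℕ) : ZMod p) = -((k : ZMod p) + 1) := by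
      have hle : k + 1 ≤ p := by omega
      have : (p - 1 - k : ℕ) = p - (k + 1) := by omega
      rw [this, Nat.cast_sub hle]
      simp [ZMod.natCast_self]
    have hC := congrArg (fun x : ℕ => (x : ZMod p)) h
    simp only [Nat.cast_mul] at hC
    rw [ih hk', hcast] at hC
    have hne : ((k : ZMod p) + 1) ≠ 0 := by
      have : (((k + 1 : ℕ)) : ZMod p) ≠ 0 := by
        rw [Ne, ZMod.natCast_eq_zero_iff]
        exact fun hdvd => absurd (Nat.le_of_dvd (succ_pos k) hdvd) (not_le.mpr hkp)
      simpa using this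
    have : (((p - 1).choose (k + 1) : ℕ) : ZMod p) * ((k : ZMod p) + 1)
        = (-1) ^ (k + 1) * ((k : ZMod p) + 1) := by
      push_cast at hC ⊢
      rw [hC]; ring
    exact mul_right_cancel₀ hne this

lemma pow_decomp (t : ℕ) : p ^ (t + 1) - 1 = p * (p ^ t - 1) + (p - 1) := by
  have hp := (Fact.out : p.Prime).pos
  have hQ : 1 ≤ p ^ t := Nat.one_le_pow _ _ hp
  rw [pow_succ, Nat.mul_comm (p ^ t) p, Nat.mul_sub, Nat.mul_one]
  have : p ≤ p * p ^ t := Nat.le_mul_of_pos_right p hQ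
  omega

/-- `C(p^t - 1, k) ≡ (-1)^k mod p` for `k ≤ p^t - 1`, `p` odd. -/
lemma choose_pow_sub_one (hodd : Odd p) (t : ℕ) : ∀ k ≤ p ^ t - 1,
    (((p ^ t - 1).choose k : ℕ) : ZMod p) = (-1) ^ k := by
  have hp := (Fact.out : p.Prime)
  induction t with
  | zero =>
    intro k hk
    norm_num at hk
    subst hk; simp
  | succ t ih =>
    intro k hk
    have hppos := hp.pos
    have hQ : 1 ≤ p ^ t := Nat.one_le_pow _ _ hppos
    have hk1 : k % p < p := Nat.mod_lt _ hppos
    have hkdec : p * (k / p) + k % p = k := by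
      have := Nat.div_add_mod k p; omega
    have hps : p ^ (t + 1) = p ^ t * p := pow_succ p t
    have hQ1 : 1 ≤ p ^ (t + 1) := Nat.one_le_pow _ _ hppos
    have hkdiv : k / p ≤ p ^ t - 1 := by
      have : k / p < p ^ t := (Nat.div_lt_iff_lt_mul hppos).mpr (by omega)
      omega
    have hls := lucas_step (p := p) (p ^ t - 1) (p - 1) (k / p) (k % p) (by omega) hk1
    rw [← pow_decomp, hkdec] at hls
    rw [hls, choose_p_sub_one _ (by omega), ih _ hkdiv]
    conv_rhs => rw [← hkdec]
    rw [pow_add, pow_mul, Odd.neg_one_pow hodd]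
    ring
/-- `C(p^t - 1 + w, p^t - 1) ≡ 0 mod p` for `1 ≤ w ≤ p^t - 1`. -/
lemma choose_pow_sub_one_add (t : ℕ) : ∀ w, 1 ≤ w → w ≤ p ^ t - 1 →
    (((p ^ t - 1 + w).choose (p ^ t - 1) : ℕ) : ZMod p) = 0 := by
  have hp := (Fact.out : p.Prime)
  have hppos := hp.pos
  induction t with
  | zero => intro w h1 h2; norm_num at h2; omega
  | succ t ih =>
    intro w h1 h2
    have hQ : 1 ≤ p ^ t := Nat.one_le_pow _ _ hppos
    have hQ1 : 1 ≤ p ^ (t + 1) := Nat.one_le_pow _ _ hppos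
    have hwdec : p * (w / p) + w % p = w := by have := Nat.div_add_mod w p; omega
    have hw0 : w % p < p := Nat.mod_lt _ hppos
    have hps : p ^ (t + 1) = p ^ t * p := pow_succ p t
    have hwdiv : w / p ≤ p ^ t - 1 := by
      have : w / p < p ^ t := (Nat.div_lt_iff_lt_mul hppos).mpr (by omega)
      omega
    rcases Nat.eq_zero_or_pos (w % p) with h0 | h0
    · -- w = p * (w/p), digit-0 addition doesn't carry
      have hdec : p ^ (t + 1) - 1 + w = p * (p ^ t - 1 + w / p) + (p - 1) := by
        have hpd := pow_decomp (p := p) t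
        have e1 : p * (p ^ t - 1 + w / p) = p * (p ^ t - 1) + p * (w / p) := Nat.mul_add ..
        omega
      have hpw : p ≤ w := by
        rcases Nat.lt_or_ge w p with hlt | hge
        · rw [Nat.mod_eq_of_lt hlt] at h0; omega
        · exact hge
      have hone : 1 ≤ w / p := (Nat.one_le_div_iff hppos).mpr hpw
      have hls := lucas_step (p := p) (p ^ t - 1 + w / p) (p - 1) (p ^ t - 1) (p - 1)
        (by omega) (by omega)
      rw [← hdec, ← pow_decomp] at hls
      rw [hls, ih (w / p) hone hwdiv]
      ring
    · -- carry at digit 0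
      have hdec : p ^ (t + 1) - 1 + w = p * (p ^ t + w / p) + (w % p - 1) := by
        have hpd := pow_decomp (p := p) t
        have e1 : p * (p ^ t + w / p) = p * p ^ t + p * (w / p) := Nat.mul_add ..
        have e2 : p * p ^ t = p * (p ^ t - 1) + p := by
          have h3 : p ^ t = (p ^ t - 1) + 1 := by omega
          rw [h3, Nat.mul_add, Nat.mul_one]
          rw [← h3]
        omega
      have hls := lucas_step (p := p) (p ^ t + w / p) (w % p - 1) (p ^ t - 1) (p - 1)
        (by omega) (by omega)
      rw [← hdec, ← pow_decomp] at hls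
      rw [hls, Nat.choose_eq_zero_of_lt (by omega)]
      simp

lemma factorial_ne_zero_zmod (b : ℕ) (hb : b < p) : ((b ! : ℕ) : ZMod p) ≠ 0 := by
  rw [Ne, ZMod.natCast_eq_zero_iff]
  intro hdvd
  exact absurd ((Nat.Prime.dvd_factorial (Fact.out)).mp hdvd) (by omega)

/-- Reflection: `C(p-1-a, b) ≡ (-1)^b C(a+b, b) mod p` for `a + b ≤ p - 1`. -/
lemma choose_reflect (a b : ℕ) (h : a + b ≤ p - 1) :
    (((p - 1 - a).choose b : ℕ) : ZMod p) = (-1) ^ b * ((a + b).choose b : ℕ) := by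
  have hp := (Fact.out : p.Prime).two_le
  have h1 : (((p - 1 - a).descFactorial b : ℕ) : ZMod p)
      = (-1) ^ b * (((a + b).descFactorial b : ℕ) : ZMod p) := by
    have e2 : (a + b).descFactorial b = ∏ i ∈ range b, (a + b - i) :=
      Nat.descFactorial_eq_prod_range _ _
    have e3 : ∏ i ∈ range b, (a + b - i) = ∏ i ∈ range b, (a + 1 + i) := by
      rw [← Finset.prod_range_reflect]
      apply Finset.prod_congr rfl
      intro i hi
      rw [Finset.mem_range] at hi
      omega
    rw [Nat.descFactorial_eq_prod_range, e2, e3]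
    push_cast
    have estep : ∀ i ∈ range b, ((p - 1 - a - i : ℕ) : ZMod p) = -1 * ((a : ZMod p) + 1 + i) := by
      intro i hi
      rw [Finset.mem_range] at hi
      have hle : a + 1 + i ≤ p := by omega
      have e4 : (p - 1 - a - i : ℕ) = p - (a + 1 + i) := by omega
      rw [e4, Nat.cast_sub hle]
      push_cast
      simp only [ZMod.natCast_self]
      ring
    rw [Finset.prod_congr rfl estep, Finset.prod_mul_distrib, Finset.prod_const,
      Finset.card_range]
  rw [Nat.descFactorial_eq_factorial_mul_choose, Nat.descFactorial_eq_factorial_mul_choose] at h1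
  push_cast at h1
  have hb : ((b ! : ℕ) : ZMod p) ≠ 0 := factorial_ne_zero_zmod b (by omega)
  apply mul_left_cancel₀ hb
  rw [h1]; ring

/-- `∏_{i<a} (2i+1) * 2^a * a! = (2a)!` -/
lemma prod_odd_factorial (a : ℕ) :
    (∏ i ∈ range a, (2 * i + 1)) * 2 ^ a * a ! = (2 * a)! := by
  induction a with
  | zero => simp
  | succ a ih =>
    rw [Finset.prod_range_succ, Nat.factorial_succ]
    have h2 : 2 * (a + 1) = (2 * a) + 1 + 1 := by ring
    rw [h2, Nat.factorial_succ, Nat.factorial_succ, ← ih]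
    ring

/-- `∏_{i<j+u} (2j-1-2i) * 2^(j+u) * j! * u! = (-1)^u (2j)! (2u)!` over ℤ. -/
lemma prod_II (j u : ℕ) :
    (∏ i ∈ range (j + u), ((2 * j : ℤ) - 1 - 2 * i)) * 2 ^ (j + u) * j ! * u !
      = (-1) ^ u * (2 * j)! * (2 * u)! := by
  rw [Finset.prod_range_add]
  have e1 : ∏ i ∈ range j, ((2 * j : ℤ) - 1 - 2 * i) = ∏ i ∈ range j, ((2 * i : ℤ) + 1) := by
    rw [← Finset.prod_range_reflect]
    apply Finset.prod_congr rfl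
    intro i hi
    rw [Finset.mem_range] at hi
    omega
  have e2 : ∏ x ∈ range u, ((2 * j : ℤ) - 1 - 2 * ((j + x : ℕ) : ℤ)) =
      (-1) ^ u * ∏ i ∈ range u, ((2 * i : ℤ) + 1) := by
    have estep : ∀ x ∈ range u, ((2 * j : ℤ) - 1 - 2 * ((j + x : ℕ) : ℤ))
        = -1 * ((2 * x : ℤ) + 1) := by
      intro x hx
      push_cast
      ring
    rw [Finset.prod_congr rfl estep, Finset.prod_mul_distrib, Finset.prod_const,
      Finset.card_range]
  rw [e1, e2]
  have hj := prod_odd_factorial j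
  have hu := prod_odd_factorial u
  have hjz := congrArg (fun x : ℕ => (x : ℤ)) hj
  have huz := congrArg (fun x : ℕ => (x : ℤ)) hu
  push_cast at hjz huz
  rw [← hjz, ← huz, pow_add]
  ring

/-- `(2j)! (2u)! C(j+u, u-j) = C(j+u,j) C(2u, j+u) (j+u)! j! u!` for `j ≤ u`. -/
lemma nat_III (j u : ℕ) (hju : j ≤ u) :
    (2 * j)! * (2 * u)! * ((j + u).choose (u - j))
      = (j + u).choose j * ((2 * u).choose (j + u)) * (j + u)! * j ! * u ! := by
  have h1 : (j + u).choose (u - j) * (u - j)! * (2 * j)! = (j + u)! := by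
    have := Nat.choose_mul_factorial_mul_factorial (show u - j ≤ j + u by omega)
    have e : j + u - (u - j) = 2 * j := by omega
    rw [e] at this; exact this
  have h2 : (j + u).choose j * j ! * u ! = (j + u)! := by
    have := Nat.choose_mul_factorial_mul_factorial (show j ≤ j + u by omega)
    have e : j + u - j = u := by omega
    rw [e] at this; exact this
  have h3 : (2 * u).choose (j + u) * (j + u)! * (u - j)! = (2 * u)! := by
    have := Nat.choose_mul_factorial_mul_factorial (show j + u ≤ 2 * u by omega)
    have e : 2 * u - (j + u) = u - j := by omega
    rw [e] at this; exact this
  have key : ((2 * j)! * (2 * u)! * ((j + u).choose (u - j))) * (u - j)!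
      = ((j + u).choose j * ((2 * u).choose (j + u)) * (j + u)! * j ! * u !) * (u - j)! := by
    calc ((2 * j)! * (2 * u)! * ((j + u).choose (u - j))) * (u - j)!
        = ((j + u).choose (u - j) * (u - j)! * (2 * j)!) * (2 * u)! := by ring
      _ = (j + u)! * (2 * u)! := by rw [h1]
      _ = (j + u)! * ((2 * u).choose (j + u) * (j + u)! * (u - j)!) := by rw [h3]
      _ = ((j + u).choose j * j ! * u !) * ((2 * u).choose (j + u) * (j + u)! * (u - j)!) := by
            rw [h2]
      _ = ((j + u).choose j * ((2 * u).choose (j + u)) * (j + u)! * j ! * u !) * (u - j)! := by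
            ring
  exact Nat.eq_of_mul_eq_mul_right (Nat.factorial_pos _) key

end Aux

/-- The mod-`p` reduction of the `r`-th Legendre polynomial
`P_r(X) = 2^{-r} · Σ_{k=0}^{⌊r/2⌋} (-1)^k · C(r,k) · C(2r-2k, r) · X^{r-2k}`,
defined directly over any field `E` (intended: of odd characteristic). -/
noncomputable def legendreMod (E : Type*) [Field E] (r : ℕ) : E[X] :=
  C (((2 : E) ^ r)⁻¹) * ∑ k ∈ Finset.range (r / 2 + 1),
    C ((-1 : E) ^ k * (r.choose k : E) * (((2 * r - 2 * k).choose r : ℕ) : E)) * X ^ (r - 2 * k)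

lemma legendreMod_coeff (E : Type*) [Field E] (r n : ℕ) :
    (legendreMod E r).coeff n = ((2 : E) ^ r)⁻¹ *
      (if n ≤ r ∧ (r - n) % 2 = 0 then
        (-1 : E) ^ ((r - n) / 2) * (r.choose ((r - n) / 2) : E) * (((r + n).choose r : ℕ) : E)
      else 0) := by
  rw [legendreMod, coeff_C_mul, finset_sum_coeff]
  congr 1
  have hterm : ∀ k, (C ((-1 : E) ^ k * (r.choose k : E) * (((2 * r - 2 * k).choose r : ℕ) : E))
      * X ^ (r - 2 * k)).coeff n =
      if n = r - 2 * k then (-1 : E) ^ k * (r.choose k : E) * (((2 * r - 2 * k).choose r : ℕ) : E)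
      else 0 := by
    intro k
    rw [coeff_C_mul, coeff_X_pow]
    split_ifs <;> simp
  simp_rw [hterm]
  by_cases hg : n ≤ r ∧ (r - n) % 2 = 0
  · rw [if_pos hg]
    obtain ⟨hn, hpar⟩ := hg
    set k0 := (r - n) / 2 with hk0
    have h2k0 : 2 * k0 = r - n := by omega
    rw [Finset.sum_eq_single k0]
    · rw [if_pos (by omega)]
      have he : 2 * r - 2 * k0 = r + n := by omega
      rw [he]
    · intro k hk hne
      rw [Finset.mem_range] at hk
      rw [if_neg (by omega)]
    · intro habs
      exfalso
      apply habs
      rw [Finset.mem_range]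
      omega
  · rw [if_neg hg]
    apply Finset.sum_eq_zero
    intro k hk
    rw [Finset.mem_range] at hk
    rw [if_neg (by omega)]

/-- For an odd prime `p`, `m ≥ 1`, `q = p^m` and `0 ≤ r ≤ p-1`, one has
`P̄_{q-1-r}(X) = P̄_r(X)` in `F_p[X]`. -/
theorem legendreMod_symm (p m : ℕ) [Fact p.Prime] (hodd : Odd p) (hm : 1 ≤ m)
    (r : ℕ) (hr : r ≤ p - 1) :
    legendreMod (ZMod p) (p ^ m - 1 - r) = legendreMod (ZMod p) r := by
  have hp := (Fact.out : p.Prime)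
  have hp2 : 2 ≤ p := hp.two_le
  have hpodd : p % 2 = 1 := Nat.odd_iff.mp hodd
  have hp3 : 3 ≤ p := by omega
  set q : ℕ := p ^ m with hqdef
  set Q : ℕ := p ^ (m - 1) with hQdef
  have hqQ : q = p * Q := by
    rw [hqdef, hQdef, ← pow_succ']
    congr 1
    omega
  have hQ1 : 1 ≤ Q := Nat.one_le_pow _ _ (by omega)
  have hq1 : p ≤ q := by
    conv_lhs => rw [← pow_one p]
    exact Nat.pow_le_pow_right (by omega) hm
  have hqodd : q % 2 = 1 := Nat.odd_iff.mp (hodd.pow)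
  have hQodd : Q % 2 = 1 := Nat.odd_iff.mp (hodd.pow)
  set s : ℕ := q - 1 - r with hsdef
  set h : ℕ := (p - 1) / 2 with hhdef
  have hh2 : 2 * h = p - 1 := by omega
  set H : ℕ := (q - 1) / 2 with hHdef
  have hH2 : 2 * H = q - 1 := by omega
  set W : ℕ := (Q - 1) / 2 with hWdef
  have hW2 : 2 * W = Q - 1 := by omega
  have hpQmul : p * (Q - 1) + p = p * Q := by
    rw [← Nat.mul_succ]
    congr 1
    omega
  have hHW : H = p * W + h := by
    have e2 : p * (2 * W) = 2 * (p * W) := by ring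
    have e3 : p * (2 * W) = p * (Q - 1) := by rw [hW2]
    omega
  -- 2^s is inverse of 2^r
  have h2ne : (2 : ZMod p) ≠ 0 := by
    have : ((2 : ℕ) : ZMod p) ≠ 0 := by
      rw [Ne, ZMod.natCast_eq_zero_iff]
      intro hdvd
      have := Nat.le_of_dvd (by norm_num) hdvd
      omega
    simpa using this
  have h2q : (2 : ZMod p) ^ (q - 1) = 1 := by
    obtain ⟨c, hc⟩ : (p - 1) ∣ (q - 1) := by
      have := Nat.sub_dvd_pow_sub_pow p 1 m
      simpa using this
    rw [hc, pow_mul, ZMod.pow_card_sub_one_eq_one h2ne, one_pow]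
  have h2r : (2 : ZMod p) ^ r ≠ 0 := pow_ne_zero _ h2ne
  have hinv : ((2 : ZMod p) ^ s)⁻¹ = 2 ^ r := by
    apply inv_eq_of_mul_eq_one_right
    rw [← pow_add]
    have : s + r = q - 1 := by omega
    rw [this, h2q]
  ext n
  rw [legendreMod_coeff, legendreMod_coeff, hinv]
  rw [eq_comm, inv_mul_eq_iff_eq_mul₀ h2r]
  -- Goal: T_r = 2^r * (2^r * T_s)
  by_cases hgr : n ≤ r ∧ (r - n) % 2 = 0
  · by_cases hgs : n ≤ s ∧ (s - n) % 2 = 0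
    · -- main case
      rw [if_pos hgr, if_pos hgs]
      obtain ⟨hnr, hparr⟩ := hgr
      obtain ⟨hns, hpars⟩ := hgs
      set j : ℕ := (r - n) / 2 with hjdef
      set u : ℕ := (r + n) / 2 with hudef
      set K : ℕ := (s - n) / 2 with hKdef
      have h2j : 2 * j = r - n := by omega
      have h2u : 2 * u = r + n := by omega
      have hju : j + u = r := by omega
      have hKu : K + u = H := by omega
      -- Step 1 : C(s+n, s) ≡ (-1)^n C(r, n)
      have step1 : (((s + n).choose s : ℕ) : ZMod p)
          = (-1) ^ n * ((r.choose n : ℕ) : ZMod p) := by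
        have hd1 : s + n = p * (Q - 1) + (p - 1 - 2 * j) := by omega
        have hd2 : s = p * (Q - 1) + (p - 1 - r) := by omega
        have hls := lucas_step (p := p) (Q - 1) (p - 1 - 2 * j) (Q - 1) (p - 1 - r)
          (by omega) (by omega)
        rw [← hd1, ← hd2, Nat.choose_self] at hls
        have hsym : (p - 1 - 2 * j).choose (p - 1 - r) = (p - 1 - 2 * j).choose n := by
          have := Nat.choose_symm (show n ≤ p - 1 - 2 * j by omega)
          rw [show p - 1 - 2 * j - n = p - 1 - r by omega] at this
          exact this
        have hrefl := choose_reflect (p := p) (2 * j) n (by omega)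
        rw [show 2 * j + n = r by omega] at hrefl
        rw [hls, hsym, hrefl]
        push_cast
        ring
      -- Step 2 : C(s, K) ≡ (-1)^K C(h+j, r)
      have step2 : ((s.choose K : ℕ) : ZMod p)
          = (-1) ^ K * (((h + j).choose r : ℕ) : ZMod p) := by
        have htri := Nat.choose_mul (n := q - 1) (show r ≤ r + K by omega)
        rw [show q - 1 - r = s by omega, show r + K - r = K by omega] at htri
        have hcast := congrArg (fun x : ℕ => (x : ZMod p)) htri
        simp only [Nat.cast_mul] at hcast
        rw [choose_pow_sub_one hodd m (r + K) (by omega),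
          choose_pow_sub_one hodd m r (by omega)] at hcast
        have hHj : ((( r + K).choose r : ℕ) : ZMod p) = (((h + j).choose r : ℕ) : ZMod p) := by
          have hd3 : r + K = p * W + (h + j) := by omega
          have hd4 : r = p * 0 + r := by omega
          have hls := lucas_step (p := p) W (h + j) 0 r (by omega) (by omega)
          rw [← hd3, ← hd4, Nat.choose_zero_right] at hls
          rw [hls]
          push_cast
          ring
        -- hcast : (-1)^(r+K) * C(r+K, r) = (-1)^r * C(s, K)
        have hsgn : ((-1 : ZMod p) ^ r) * ((-1) ^ r) = 1 := by
          rw [← pow_add, ← two_mul, pow_mul, neg_one_sq, one_pow]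
        calc ((s.choose K : ℕ) : ZMod p)
            = ((-1 : ZMod p) ^ r * (-1) ^ r) * (s.choose K : ℕ) := by rw [hsgn, one_mul]
          _ = (-1) ^ r * ((-1) ^ r * ((s.choose K : ℕ) : ZMod p)) := by ring
          _ = (-1) ^ r * ((-1) ^ (r + K) * (((r + K).choose r : ℕ) : ZMod p)) := by
              rw [← hcast]
          _ = ((-1 : ZMod p) ^ (r + (r + K))) * (((r + K).choose r : ℕ) : ZMod p) := by
              rw [pow_add]; ring
          _ = (-1) ^ K * (((h + j).choose r : ℕ) : ZMod p) := by
              rw [show r + (r + K) = 2 * r + K by ring, pow_add, pow_mul, neg_one_sq, one_pow,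
                one_mul, hHj]
      rw [step1, step2]
      have hKK : ((-1 : ZMod p) ^ K) * ((-1) ^ K) = 1 := by
        rw [← pow_add, ← two_mul, pow_mul, neg_one_sq, one_pow]
      rcases Nat.lt_or_ge (h + j) r with hcase | hcase
      · -- h + j < r : both sides vanish
        have hz1 : (h + j).choose r = 0 := Nat.choose_eq_zero_of_lt hcase
        have hz2 : (((r + n).choose r : ℕ) : ZMod p) = 0 := by
          have hup : h < u := by omega
          have hrnp : p ≤ r + n := by omega
          have hd1 : r + n = p * 1 + (r + n - p) := by omega
          have hd2 : r = p * 0 + r := by omega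
          have hls := lucas_step (p := p) 1 (r + n - p) 0 r (by omega) (by omega)
          rw [← hd1, ← hd2, Nat.choose_eq_zero_of_lt (show r + n - p < r by omega)] at hls
          rw [hls]
          push_cast
          ring
        rw [hz1, hz2]
        push_cast
        ring
      · -- the central identity
        have hju2 : j ≤ u := by omega
        have hup : u ≤ p - 1 := by omega
        have hFr : ((r ! : ℕ) : ZMod p) ≠ 0 := factorial_ne_zero_zmod r (by omega)
        have hFj : ((j ! : ℕ) : ZMod p) ≠ 0 := factorial_ne_zero_zmod j (by omega)
        have hFu : ((u ! : ℕ) : ZMod p) ≠ 0 := factorial_ne_zero_zmod u (by omega)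
        have hF : ((r ! : ℕ) : ZMod p) * ((j ! : ℕ) : ZMod p) * ((u ! : ℕ) : ZMod p) ≠ 0 :=
          mul_ne_zero (mul_ne_zero hFr hFj) hFu
        have hhm : (2 : ZMod p) * ((h : ℕ) : ZMod p) = -1 := by
          have h1 : ((2 * h : ℕ) : ZMod p) = ((p - 1 : ℕ) : ZMod p) := by rw [hh2]
          rw [Nat.cast_sub (by omega : 1 ≤ p), ZMod.natCast_self, Nat.cast_mul] at h1
          push_cast at h1
          rw [h1]
          ring
        have e_ch : (((h + j).descFactorial r : ℕ) : ZMod p)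
            = ((r ! : ℕ) : ZMod p) * (((h + j).choose r : ℕ) : ZMod p) := by
          have := Nat.descFactorial_eq_factorial_mul_choose (h + j) r
          exact_mod_cast congrArg (fun x : ℕ => (x : ZMod p)) this
        have e_df : (((h + j).descFactorial r : ℕ) : ZMod p) * 2 ^ r
            = ∏ i ∈ range r, (2 * ((j : ℕ) : ZMod p) - 1 - 2 * ((i : ℕ) : ZMod p)) := by
          rw [Nat.descFactorial_eq_prod_range]
          push_cast
          rw [show ((2 : ZMod p)) ^ r = ∏ _i ∈ range r, (2 : ZMod p) by
            rw [Finset.prod_const, Finset.card_range], ← Finset.prod_mul_distrib]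
          apply Finset.prod_congr rfl
          intro i hi
          rw [Finset.mem_range] at hi
          have hile : i ≤ h + j := by omega
          rw [Nat.cast_sub hile]
          push_cast
          linear_combination hhm
        have e_II0 := prod_II j u
        rw [hju, h2u] at e_II0
        have e_II := congrArg (fun x : ℤ => (x : ZMod p)) e_II0
        push_cast at e_II
        have e_III0 := nat_III j u hju2
        rw [hju, show u - j = n by omega, h2u] at e_III0
        have e_III := congrArg (fun x : ℕ => (x : ZMod p)) e_III0
        push_cast at e_III
        have e_sgn : ((-1 : ZMod p) ^ n) * ((-1) ^ u) = (-1) ^ j := by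
          rw [← pow_add, show n + u = j + 2 * (u - j) by omega, pow_add, pow_mul, neg_one_sq,
            one_pow, mul_one]
        apply mul_right_cancel₀ hF
        linear_combination
          ((2 : ZMod p) ^ r * 2 ^ r * (-1) ^ n * ((r.choose n : ℕ) : ZMod p)
              * ((j ! : ℕ) : ZMod p) * ((u ! : ℕ) : ZMod p)) * e_ch
          + (-((2 : ZMod p) ^ r * (-1) ^ n * ((r.choose n : ℕ) : ZMod p)
              * ((j ! : ℕ) : ZMod p) * ((u ! : ℕ) : ZMod p))) * e_df
          + (-((-1 : ZMod p) ^ n * ((r.choose n : ℕ) : ZMod p))) * e_II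
          + (-((-1 : ZMod p) ^ n * (-1) ^ u)) * e_III
          + (-(((r.choose j : ℕ) : ZMod p) * (((r + n).choose r : ℕ) : ZMod p)
              * ((r ! : ℕ) : ZMod p) * ((j ! : ℕ) : ZMod p) * ((u ! : ℕ) : ZMod p))) * e_sgn
          + (-((2 : ZMod p) ^ r * 2 ^ r * (((h + j).choose r : ℕ) : ZMod p) * (-1) ^ n
              * ((r.choose n : ℕ) : ZMod p) * ((r ! : ℕ) : ZMod p) * ((j ! : ℕ) : ZMod p)
              * ((u ! : ℕ) : ZMod p))) * hKK
    · -- n > s : C(r+n, r) ≡ 0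
      rw [if_pos hgr, if_neg hgs]
      obtain ⟨hnr, hparr⟩ := hgr
      have hns : s < n := by omega
      have hrnp : p ≤ r + n := by omega
      have hrn2 : r + n - p < p := by omega
      have hd1 : r + n = p * 1 + (r + n - p) := by omega
      have hd2 : r = p * 0 + r := by omega
      have hls := lucas_step (p := p) 1 (r + n - p) 0 r (by omega) (by omega)
      rw [← hd1, ← hd2, Nat.choose_eq_zero_of_lt (show r + n - p < r by omega)] at hls
      rw [hls]
      push_cast
      ring
  · by_cases hgs : n ≤ s ∧ (s - n) % 2 = 0
    · -- n > r : C(s+n, s) ≡ 0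
      rw [if_neg hgr, if_pos hgs]
      obtain ⟨hns, hpars⟩ := hgs
      have hnr : r < n := by omega
      set n0 : ℕ := n % p with hn0def
      set n1 : ℕ := n / p with hn1def
      have hdm : p * n1 + n0 = n := by rw [hn0def, hn1def, Nat.div_add_mod]
      have hn0p : n0 < p := Nat.mod_lt _ (by omega)
      have hn1Q : n1 ≤ Q - 1 := by
        have : n1 < Q := by
          rw [hn1def]
          apply (Nat.div_lt_iff_lt_mul (by omega : 0 < p)).mpr
          have : Q * p = q := by rw [Nat.mul_comm]; omega
          omega
        omega
      have hd2 : s = p * (Q - 1) + (p - 1 - r) := by omega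
      rcases Nat.lt_or_ge r n0 with hcase | hcase
      · -- carry at digit 0
        have hmul : p * (Q + n1) = p * Q + p * n1 := Nat.mul_add ..
        have hd1 : s + n = p * (Q + n1) + (n0 - r - 1) := by omega
        have hls := lucas_step (p := p) (Q + n1) (n0 - r - 1) (Q - 1) (p - 1 - r)
          (by omega) (by omega)
        rw [← hd1, ← hd2, Nat.choose_eq_zero_of_lt (show n0 - r - 1 < p - 1 - r by omega)]
          at hls
        rw [hls]
        push_cast
        ring
      · -- no carry at digit 0, carry higher up
        have hpn : p ≤ n := by
          rcases Nat.lt_or_ge n p with hl | hg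
          · exfalso
            rw [hn0def, Nat.mod_eq_of_lt hl] at hcase
            omega
          · exact hg
        have hn1pos : 1 ≤ n1 := by
          rw [hn1def]
          exact (Nat.one_le_div_iff (by omega)).mpr hpn
        have hmul : p * (Q - 1 + n1) = p * (Q - 1) + p * n1 := Nat.mul_add ..
        have hd1 : s + n = p * (Q - 1 + n1) + (p - 1 - r + n0) := by omega
        have hls := lucas_step (p := p) (Q - 1 + n1) (p - 1 - r + n0) (Q - 1) (p - 1 - r)
          (by omega) (by omega)
        rw [← hd1, ← hd2] at hls
        rw [hls, choose_pow_sub_one_add (m - 1) n1 hn1pos (by rw [← hQdef]; omega)]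
        ring
    · rw [if_neg hgr, if_neg hgs]
      ring
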